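/- Let F : ℝ^{r'} → ℝ^r be a surjective linear map mapping the lattice ℤ^{r'} into ℤ^r, and let σ ⊆ ℝ^r be an n-dimensional rational polyhedron. Then F⁻¹(σ) is a rational polyhedron of dimension n + r' − r, and its direction space is the preimage under F of the direction space of σ; in particular F(relint(F⁻¹(σ))) = relint(σ). -/

import Mathlib

open Set Submodule Module

/-- A rational (integral `ℝ`-affine) polyhedron in `ℝ^r`: a finite
intersection of half-spaces with integral normals. -/
def IsRatPolyhedron (r : ℕ) (s : Set (Fin r → ℝ)) : Prop :=
  ∃ (m : ℕ) (l : Fin m → Fin r → ℤ) (c : Fin m → ℝ),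
    s = ⋂ i, {x | ∑ k, (l i k : ℝ) * x k ≤ c i}

private lemma image_interior_preimage' {X Y : Type*} [TopologicalSpace X] [TopologicalSpace Y]
    {f : X → Y} (hc : Continuous f) (ho : IsOpenMap f) (hs : Function.Surjective f)
    (T : Set Y) : f '' interior (f ⁻¹' T) = interior T := by
  apply subset_antisymm
  · exact interior_maximal ((Set.image_mono (f := f) interior_subset).trans
      (Set.image_preimage_subset f T)) (ho _ isOpen_interior)
  · intro y hy
    obtain ⟨x, rfl⟩ := hs y
    exact ⟨x, preimage_interior_subset_interior_preimage hc hy, rfl⟩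

/-- **Preimage of a rational polyhedron under a surjective integral linear
map.**
Let `F : ℝ^{r'} → ℝ^r` be a surjective linear map sending `ℤ^{r'}` into
`ℤ^r`, and let `σ ⊆ ℝ^r` be a nonempty rational polyhedron of dimension `n`.
Then `F⁻¹(σ)` is a rational polyhedron of dimension `n + r' − r`, its
direction space is the preimage under `F` of the direction space of `σ`, and
`F` maps the relative interior of `F⁻¹(σ)` onto the relative interior of
`σ`. -/
theorem preimage_rational_polyhedron
    (r' r n : ℕ)
    (F : (Fin r' → ℝ) →ₗ[ℝ] (Fin r → ℝ))
    (hsurj : Function.Surjective F)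
    (hint : ∀ v : Fin r' → ℤ, ∃ w : Fin r → ℤ,
        F (fun i => (v i : ℝ)) = fun j => (w j : ℝ))
    (σ : Set (Fin r → ℝ)) (hσ : IsRatPolyhedron r σ) (hne : σ.Nonempty)
    (hdim : Module.finrank ℝ (vectorSpan ℝ σ) = n) :
    IsRatPolyhedron r' (F ⁻¹' σ) ∧
    Module.finrank ℝ (vectorSpan ℝ (F ⁻¹' σ)) = n + r' - r ∧
    vectorSpan ℝ (F ⁻¹' σ) = (vectorSpan ℝ σ).comap F ∧
    F '' intrinsicInterior ℝ (F ⁻¹' σ) = intrinsicInterior ℝ σ := by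
  classical
  obtain ⟨p, hp⟩ := hne
  obtain ⟨q, hq⟩ := hsurj p
  have hqσ : q ∈ F ⁻¹' σ := by simp [Set.mem_preimage, hq, hp]
  -- Part 1 : polyhedron
  have hpoly : IsRatPolyhedron r' (F ⁻¹' σ) := by
    obtain ⟨m, l, c, hs⟩ := hσ
    choose w hw using fun j : Fin r' => hint (fun i => if j = i then 1 else 0)
    refine ⟨m, fun i j => ∑ k, l i k * w j k, c, ?_⟩
    have hF : ∀ y : Fin r' → ℝ, ∀ k, F y k = ∑ j, y j * (w j k : ℝ) := by
      intro y k
      have hy : y = ∑ j, y j • (fun i => if j = i then (1:ℝ) else 0) := pi_eq_sum_univ y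
      have hcoe : ∀ j : Fin r', (fun i => ((if j = i then (1:ℤ) else 0 : ℤ) : ℝ))
          = (fun i => if j = i then (1:ℝ) else 0) := by
        intro j; funext i; split <;> simp
      conv_lhs => rw [hy]
      rw [map_sum, Finset.sum_apply]
      refine Finset.sum_congr rfl fun j _ => ?_
      rw [F.map_smul]
      have hwj := hw j
      rw [hcoe j] at hwj
      simp [hwj]
    rw [hs, Set.preimage_iInter]
    refine Set.iInter_congr fun i => ?_
    ext y
    simp only [Set.mem_preimage, Set.mem_setOf_eq]
    have heq : ∑ k, (l i k : ℝ) * F y k = ∑ j, ((∑ k, l i k * w j k : ℤ) : ℝ) * y j := by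
      simp_rw [hF y, Finset.mul_sum]
      rw [Finset.sum_comm]
      push_cast
      simp_rw [Finset.sum_mul]
      exact Finset.sum_congr rfl fun j _ => Finset.sum_congr rfl fun k _ => by ring
    rw [heq]
  -- Part 3 : direction space
  have hmap : Submodule.map F (vectorSpan ℝ (F ⁻¹' σ)) = vectorSpan ℝ σ := by
    rw [vectorSpan_def, vectorSpan_def, Submodule.map_span]
    congr 1
    ext v
    constructor
    · rintro ⟨d, hd, rfl⟩
      rw [Set.mem_vsub] at hd
      obtain ⟨a, ha, b, hb, rfl⟩ := hd
      rw [Set.mem_vsub]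
      exact ⟨F a, ha, F b, hb, by simp [vsub_eq_sub, map_sub]⟩
    · intro hv
      rw [Set.mem_vsub] at hv
      obtain ⟨a, ha, b, hb, rfl⟩ := hv
      obtain ⟨a', rfl⟩ := hsurj a
      obtain ⟨b', rfl⟩ := hsurj b
      exact ⟨a' - b', Set.mem_vsub.2 ⟨a', ha, b', hb, rfl⟩, by simp [vsub_eq_sub, map_sub]⟩
  have hker : LinearMap.ker F ≤ vectorSpan ℝ (F ⁻¹' σ) := by
    intro k hk
    have h1 : q + k ∈ F ⁻¹' σ := by
      simp [Set.mem_preimage, map_add, hq, LinearMap.mem_ker.mp hk, hp]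
    have h2 := vsub_mem_vectorSpan ℝ h1 hqσ
    simpa [vsub_eq_sub] using h2
  have hcomap : vectorSpan ℝ (F ⁻¹' σ) = (vectorSpan ℝ σ).comap F := by
    rw [← hmap, Submodule.comap_map_eq, sup_eq_left.mpr hker]
  -- Part 2 : dimension
  have hrange : LinearMap.range F = ⊤ := LinearMap.range_eq_top.mpr hsurj
  have hrkF : finrank ℝ (LinearMap.range F) = r := by
    rw [hrange, finrank_top]; simp
  have hrn := LinearMap.finrank_range_add_finrank_ker F
  rw [hrkF] at hrn
  have hr' : finrank ℝ (Fin r' → ℝ) = r' := by simp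
  rw [hr'] at hrn
  have hle : r ≤ r' := by omega
  have hdim' : finrank ℝ (vectorSpan ℝ (F ⁻¹' σ)) = n + r' - r := by
    rw [hcomap]
    set W := vectorSpan ℝ σ
    set C := W.comap F with hC
    have hkerle : LinearMap.ker F ≤ C := by
      intro k hk
      simp [hC, Submodule.mem_comap, LinearMap.mem_ker.mp hk]
    set g : C →ₗ[ℝ] (Fin r → ℝ) := F ∘ₗ C.subtype with hg
    have hrg : LinearMap.range g = W := by
      rw [hg, LinearMap.range_comp, Submodule.range_subtype, Submodule.map_comap_eq, hrange,
        top_inf_eq]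
    have hkg : LinearMap.ker g = Submodule.comap C.subtype (LinearMap.ker F) := by
      rw [hg, LinearMap.ker_comp]
    have hfkg : finrank ℝ (LinearMap.ker g) = finrank ℝ (LinearMap.ker F) := by
      rw [hkg]
      exact LinearEquiv.finrank_eq (Submodule.comapSubtypeEquivOfLe hkerle)
    have := LinearMap.finrank_range_add_finrank_ker g
    rw [hrg, hfkg, hdim] at this
    omega
  refine ⟨hpoly, hdim', hcomap, ?_⟩
  -- Part 4 : relative interior
  have hAset : (affineSpan ℝ (F ⁻¹' σ) : Set (Fin r' → ℝ))
      = F ⁻¹' (affineSpan ℝ σ : Set (Fin r → ℝ)) := by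
    ext x
    rw [SetLike.mem_coe,
      ← AffineSubspace.vsub_right_mem_direction_iff_mem (mem_affineSpan ℝ hqσ) x,
      direction_affineSpan, hcomap]
    rw [Set.mem_preimage, SetLike.mem_coe,
      ← AffineSubspace.vsub_right_mem_direction_iff_mem (mem_affineSpan ℝ hp) (F x),
      direction_affineSpan]
    simp [Submodule.mem_comap, vsub_eq_sub, map_sub, hq]
  set A' := affineSpan ℝ (F ⁻¹' σ) with hA'
  set A := affineSpan ℝ σ with hA
  have hmem : ∀ x : A', F x.1 ∈ A := by
    intro x
    have := x.2
    rw [← SetLike.mem_coe, hAset] at this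
    exact this
  set φ : A' → A := fun x => ⟨F x.1, hmem x⟩ with hφ
  have hφcont : Continuous φ :=
    Continuous.subtype_mk ((F.continuous_of_finiteDimensional).comp continuous_subtype_val) _
  have hφsurj : Function.Surjective φ := by
    intro z
    obtain ⟨x, hx⟩ := hsurj z.1
    have hxA' : x ∈ A' := by
      rw [← SetLike.mem_coe, hAset, Set.mem_preimage, hx]
      exact z.2
    exact ⟨⟨x, hxA'⟩, Subtype.ext hx⟩
  have hFopen : IsOpenMap F := by
    have h := ContinuousLinearMap.isOpenMap (LinearMap.toContinuousLinearMap F)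
      (by simpa using hsurj)
    simpa using h
  have hφopen : IsOpenMap φ := by
    intro U hU
    rw [isOpen_induced_iff] at hU
    obtain ⟨V, hV, rfl⟩ := hU
    have himg : φ '' (Subtype.val ⁻¹' V) = Subtype.val ⁻¹' (F '' V) := by
      ext z
      constructor
      · rintro ⟨x, hx, rfl⟩
        exact ⟨x.1, hx, rfl⟩
      · rintro ⟨v, hv, hFv⟩
        have hvA' : v ∈ A' := by
          rw [← SetLike.mem_coe, hAset, Set.mem_preimage, hFv]
          exact z.2
        exact ⟨⟨v, hvA'⟩, hv, Subtype.ext hFv⟩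
    rw [himg]
    exact (hFopen V hV).preimage continuous_subtype_val
  have hpre : (Subtype.val ⁻¹' (F ⁻¹' σ) : Set A') = φ ⁻¹' (Subtype.val ⁻¹' σ) := rfl
  have key := image_interior_preimage' hφcont hφopen hφsurj (Subtype.val ⁻¹' σ)
  show F '' intrinsicInterior ℝ (F ⁻¹' σ) = intrinsicInterior ℝ σ
  unfold intrinsicInterior
  rw [← Set.image_comp]
  have hcomp : (F ∘ (Subtype.val : A' → (Fin r' → ℝ))) = Subtype.val ∘ φ := rfl
  rw [hcomp, Set.image_comp, hpre, key]
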